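/- Fix an integer d ≥ 1, a real Λ > 1, m ∈ ℕ, and reals q > 0 and q′ > 0. Define h(z) := Λ^{−m}·h_d(Λ^{m/d}·z), h′(z) := Λ^{−(m+1)}·h_d(Λ^{(m+1)/d}·z), and β : ℂ × ℝ → ℂ × ℝ by β(x,t) := ( ((q−t)/q)·h(x) + (t/q)·h′(x), (q′/q)·t ). Then for all x, y ∈ ℂ with |x| ≤ Λ^{−(m+1)/d} and |y| ≤ Λ^{−(m+1)/d} and all t, s ∈ [0, q]: |β₁(x,t) − β₁(y,s)| + |β₂(x,t) − β₂(y,s)| ≤ d·Λ^{−m(1−1/d)}·|x − y| + (2·Λ^{−m}/q + q′/q)·|t − s|; in particular β is Lipschitz on the cylinder {|x| ≤ Λ^{−(m+1)/d}} × [0, q]. -/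

import Mathlib

/-- The winding map of degree `d`: `h_d(z) = |z|^(1-d) * z^d` for `|z| ≤ 1`
(so `h_d(r e^{it}) = r e^{idt}` there), and `h_d(z) = z^d` for `|z| ≥ 1`. -/
noncomputable def windingMap (d : ℕ) (z : ℂ) : ℂ :=
  if ‖z‖ ≤ 1 then ((‖z‖ ^ ((1 : ℝ) - (d : ℝ)) : ℝ) : ℂ) * z ^ d
  else z ^ d

/-- The rescaled winding map `h(z) = Λ^(-m) · h_d(Λ^(m/d) · z)`. -/
noncomputable def rsWinding (d : ℕ) (Λ : ℝ) (m : ℕ) (z : ℂ) : ℂ :=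
  ((Λ ^ (-(m : ℝ)) : ℝ) : ℂ) * windingMap d (((Λ ^ ((m : ℝ) / (d : ℝ)) : ℝ) : ℂ) * z)

lemma pow_diff_le (d : ℕ) (a b : ℂ) (ha : ‖a‖ ≤ 1) (hb : ‖b‖ ≤ 1) :
    ‖a ^ d - b ^ d‖ ≤ d * ‖a - b‖ := by
  induction d with
  | zero => simp
  | succ n ih =>
    have key : a ^ (n+1) - b ^ (n+1) = a ^ n * (a - b) + (a ^ n - b ^ n) * b := by ring
    rw [key]
    calc ‖a ^ n * (a - b) + (a ^ n - b ^ n) * b‖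
        ≤ ‖a ^ n * (a - b)‖ + ‖(a ^ n - b ^ n) * b‖ :=
          norm_add_le _ _
      _ ≤ 1 * ‖a - b‖ + (n * ‖a - b‖) * 1 := by
          rw [norm_mul, norm_mul]
          have h1 : ‖a ^ n‖ ≤ 1 := by
            rw [norm_pow]; exact pow_le_one₀ (norm_nonneg a) ha
          exact add_le_add (mul_le_mul_of_nonneg_right h1 (norm_nonneg _))
            (mul_le_mul ih hb (norm_nonneg _)
              (mul_nonneg (Nat.cast_nonneg n) (norm_nonneg _)))
      _ = (n + 1 : ℕ) * ‖a - b‖ := by push_cast; ring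

lemma abs_windingMap (d : ℕ) (hd : 1 ≤ d) (z : ℂ) (hz : ‖z‖ ≤ 1) :
    ‖windingMap d z‖ = ‖z‖ := by
  rw [windingMap, if_pos hz]
  rcases eq_or_ne z 0 with rfl | h0
  · simp [zero_pow (by omega : d ≠ 0)]
  · have hz0 : 0 < ‖z‖ := norm_pos_iff.mpr h0
    rw [norm_mul, Complex.norm_real, Real.norm_eq_abs, norm_pow, _root_.abs_of_nonneg (Real.rpow_nonneg hz0.le _),
      ← Real.rpow_natCast (‖z‖) d, ← Real.rpow_add hz0]
    norm_num

lemma windingMap_eq (d : ℕ) (z : ℂ) (h0 : z ≠ 0) (hz : ‖z‖ ≤ 1) :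
    windingMap d z = ((‖z‖ : ℝ) : ℂ) * (z / ‖z‖) ^ d := by
  have hz0 : (0:ℝ) < ‖z‖ := norm_pos_iff.mpr h0
  have key : ((‖z‖ ^ ((1:ℝ) - d) : ℝ) : ℂ) = ((‖z‖ : ℝ) : ℂ) / ((‖z‖ : ℝ) : ℂ) ^ d := by
    rw [← Complex.ofReal_pow, ← Complex.ofReal_div]
    congr 1
    rw [Real.rpow_sub hz0, Real.rpow_one, Real.rpow_natCast]
  rw [windingMap, if_pos hz, key, div_pow]
  field_simp

lemma normSq_polar (r s : ℝ) (a b : ℂ) (ha : ‖a‖ = 1) (hb : ‖b‖ = 1) :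
    Complex.normSq (((r:ℝ):ℂ) * a - ((s:ℝ):ℂ) * b)
      = (r - s) ^ 2 + r * s * Complex.normSq (a - b) := by
  have ha' : a.re ^ 2 + a.im ^ 2 = 1 := by
    have := Complex.sq_norm a
    rw [ha] at this
    simpa [Complex.normSq_apply, sq] using this.symm
  have hb' : b.re ^ 2 + b.im ^ 2 = 1 := by
    have := Complex.sq_norm b
    rw [hb] at this
    simpa [Complex.normSq_apply, sq] using this.symm
  simp only [Complex.normSq_apply, Complex.sub_re, Complex.sub_im, Complex.mul_re,
    Complex.mul_im, Complex.ofReal_re, Complex.ofReal_im]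
  linear_combination (r ^ 2 - r * s) * ha' + (s ^ 2 - r * s) * hb'

lemma windingMap_lip (d : ℕ) (hd : 1 ≤ d) (u v : ℂ)
    (hu : ‖u‖ ≤ 1) (hv : ‖v‖ ≤ 1) :
    ‖windingMap d u - windingMap d v‖ ≤ d * ‖u - v‖ := by
  have hd1 : (1:ℝ) ≤ d := by exact_mod_cast hd
  rcases eq_or_ne u 0 with rfl | hu0
  · have h0 : windingMap d 0 = 0 := by
      simp [windingMap, zero_pow (by omega : d ≠ 0)]
    rw [h0, zero_sub, norm_neg, abs_windingMap d hd v hv, zero_sub, norm_neg]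
    nlinarith [norm_nonneg v]
  rcases eq_or_ne v 0 with rfl | hv0
  · have h0 : windingMap d 0 = 0 := by
      simp [windingMap, zero_pow (by omega : d ≠ 0)]
    rw [h0, sub_zero, abs_windingMap d hd u hu, sub_zero]
    nlinarith [norm_nonneg u]
  · set r := ‖u‖ with hr
    set s := ‖v‖ with hs
    have hr0 : 0 < r := norm_pos_iff.mpr hu0
    have hs0 : 0 < s := norm_pos_iff.mpr hv0
    set a := u / (r:ℂ) with hA
    set b := v / (s:ℂ) with hB
    have haa : ‖a‖ = 1 := by
      rw [hA, norm_div, Complex.norm_real, Real.norm_eq_abs, _root_.abs_of_nonneg hr0.le, div_self hr0.ne']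
    have hbb : ‖b‖ = 1 := by
      rw [hB, norm_div, Complex.norm_real, Real.norm_eq_abs, _root_.abs_of_nonneg hs0.le, div_self hs0.ne']
    have hrne : ((r:ℝ):ℂ) ≠ 0 := by
      simpa using hr0.ne'
    have hsne : ((s:ℝ):ℂ) ≠ 0 := by
      simpa using hs0.ne'
    have hu' : u = ((r:ℝ):ℂ) * a := by
      rw [hA, mul_comm, div_mul_cancel₀ u hrne]
    have hv' : v = ((s:ℝ):ℂ) * b := by
      rw [hB, mul_comm, div_mul_cancel₀ v hsne]
    rw [windingMap_eq d u hu0 hu, windingMap_eq d v hv0 hv]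
    -- squared inequality
    have key1 : Complex.normSq (((r:ℝ):ℂ) * a ^ d - ((s:ℝ):ℂ) * b ^ d)
        = (r - s) ^ 2 + r * s * Complex.normSq (a ^ d - b ^ d) :=
      normSq_polar r s _ _ (by rw [norm_pow, haa, one_pow]) (by rw [norm_pow, hbb, one_pow])
    have key2 : Complex.normSq (u - v) = (r - s) ^ 2 + r * s * Complex.normSq (a - b) := by
      rw [hu', hv']; exact normSq_polar r s a b haa hbb
    have hpd : ‖a ^ d - b ^ d‖ ≤ d * ‖a - b‖ :=
      pow_diff_le d a b haa.le hbb.le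
    have hsq : Complex.normSq (a ^ d - b ^ d) ≤ d ^ 2 * Complex.normSq (a - b) := by
      rw [← Complex.sq_norm, ← Complex.sq_norm]
      nlinarith [norm_nonneg (a ^ d - b ^ d), norm_nonneg (a - b)]
    have hfin : Complex.normSq (((r:ℝ):ℂ) * a ^ d - ((s:ℝ):ℂ) * b ^ d)
        ≤ d ^ 2 * Complex.normSq (u - v) := by
      rw [key1, key2]
      have e1 : (r - s) ^ 2 ≤ (d:ℝ) ^ 2 * (r - s) ^ 2 :=
        le_mul_of_one_le_left (sq_nonneg (r - s)) (by nlinarith : (1:ℝ) ≤ (d:ℝ) ^ 2)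
      have e2 : r * s * Complex.normSq (a ^ d - b ^ d)
          ≤ r * s * ((d:ℝ) ^ 2 * Complex.normSq (a - b)) :=
        mul_le_mul_of_nonneg_left hsq (mul_nonneg hr0.le hs0.le)
      nlinarith [e1, e2]
    have := hfin
    rw [← Complex.sq_norm, ← Complex.sq_norm (u - v)] at this
    have habs : ‖((r:ℝ):ℂ) * a ^ d - ((s:ℝ):ℂ) * b ^ d‖
        ≤ d * ‖u - v‖ := by
      nlinarith [norm_nonneg (((r:ℝ):ℂ) * a ^ d - ((s:ℝ):ℂ) * b ^ d),
        norm_nonneg (u - v), mul_nonneg (le_trans zero_le_one hd1) (norm_nonneg (u - v))]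
    exact habs

lemma rs_abs (d : ℕ) (hd : 1 ≤ d) (Λ : ℝ) (hΛ : 0 < Λ) (m : ℕ) (x : ℂ)
    (hx : ‖((Λ ^ ((m : ℝ) / (d : ℝ)) : ℝ) : ℂ) * x‖ ≤ 1) :
    ‖rsWinding d Λ m x‖ ≤ Λ ^ (-(m : ℝ)) := by
  rw [rsWinding, norm_mul, Complex.norm_real, Real.norm_eq_abs,
    _root_.abs_of_nonneg (Real.rpow_nonneg hΛ.le _), abs_windingMap d hd _ hx]
  calc Λ ^ (-(m:ℝ)) * ‖((Λ ^ ((m : ℝ) / (d : ℝ)) : ℝ) : ℂ) * x‖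
      ≤ Λ ^ (-(m:ℝ)) * 1 := by
        exact mul_le_mul_of_nonneg_left hx (Real.rpow_nonneg hΛ.le _)
    _ = Λ ^ (-(m:ℝ)) := mul_one _

lemma rs_lip (d : ℕ) (hd : 1 ≤ d) (Λ : ℝ) (hΛ : 0 < Λ) (m : ℕ) (x y : ℂ)
    (hx : ‖((Λ ^ ((m : ℝ) / (d : ℝ)) : ℝ) : ℂ) * x‖ ≤ 1)
    (hy : ‖((Λ ^ ((m : ℝ) / (d : ℝ)) : ℝ) : ℂ) * y‖ ≤ 1) :
    ‖rsWinding d Λ m x - rsWinding d Λ m y‖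
      ≤ d * Λ ^ (-(m : ℝ) * (1 - 1 / (d : ℝ))) * ‖x - y‖ := by
  have hdR : (0:ℝ) < d := by exact_mod_cast hd
  set c : ℝ := Λ ^ ((m : ℝ) / (d : ℝ)) with hc
  rw [rsWinding, rsWinding, ← mul_sub, norm_mul, Complex.norm_real, Real.norm_eq_abs,
    _root_.abs_of_nonneg (Real.rpow_nonneg hΛ.le _)]
  have step := windingMap_lip d hd _ _ hx hy
  have e1 : ((c:ℝ):ℂ) * x - ((c:ℝ):ℂ) * y = ((c:ℝ):ℂ) * (x - y) := by ring
  rw [e1, norm_mul, Complex.norm_real, Real.norm_eq_abs, _root_.abs_of_nonneg (Real.rpow_nonneg hΛ.le _)] at step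
  calc Λ ^ (-(m:ℝ)) * ‖windingMap d (((c:ℝ):ℂ) * x) - windingMap d (((c:ℝ):ℂ) * y)‖
      ≤ Λ ^ (-(m:ℝ)) * ((d:ℝ) * (c * ‖x - y‖)) :=
        mul_le_mul_of_nonneg_left step (Real.rpow_nonneg hΛ.le _)
    _ = (d:ℝ) * (Λ ^ (-(m:ℝ)) * c) * ‖x - y‖ := by ring
    _ = (d:ℝ) * Λ ^ (-(m : ℝ) * (1 - 1 / (d : ℝ))) * ‖x - y‖ := by
        rw [hc, ← Real.rpow_add hΛ]
        congr 2
        field_simp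
        ring

lemma scale_le_one (Λ : ℝ) (hΛ : 1 < Λ) (e f : ℝ) (hef : e + f ≤ 0) (x : ℂ)
    (hx : ‖x‖ ≤ Λ ^ f) :
    ‖((Λ ^ e : ℝ) : ℂ) * x‖ ≤ 1 := by
  have hΛ0 : (0:ℝ) < Λ := lt_trans zero_lt_one hΛ
  rw [norm_mul, Complex.norm_real, Real.norm_eq_abs, _root_.abs_of_nonneg (Real.rpow_nonneg hΛ0.le _)]
  calc Λ ^ e * ‖x‖ ≤ Λ ^ e * Λ ^ f :=
        mul_le_mul_of_nonneg_left hx (Real.rpow_nonneg hΛ0.le _)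
    _ = Λ ^ (e + f) := (Real.rpow_add hΛ0 _ _).symm
    _ ≤ 1 := Real.rpow_le_one_of_one_le_of_nonpos hΛ.le hef

/-- The interpolation map `β(x,t) = (((q−t)/q)·h(x) + (t/q)·h′(x), (q′/q)·t)` between the
cylinders `{|x| ≤ Λ^(-(m+1)/d)} × [0,q]` and `{|x| ≤ Λ^(-(m+1))} × [0,q′]` satisfies the
explicit Lipschitz bound
`|β₁(x,t) − β₁(y,s)| + |β₂(x,t) − β₂(y,s)| ≤ d·Λ^(−m(1−1/d))·|x−y| + (2Λ^(−m)/q + q′/q)·|t−s|`;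
in particular `β` is Lipschitz on the cylinder. -/
theorem beta_lipschitz (d : ℕ) (hd : 1 ≤ d) (Λ : ℝ) (hΛ : 1 < Λ) (m : ℕ)
    (q q' : ℝ) (hq : 0 < q) (hq' : 0 < q') :
    (∀ x y : ℂ, ‖x‖ ≤ Λ ^ (-((m : ℝ) + 1) / (d : ℝ)) →
      ‖y‖ ≤ Λ ^ (-((m : ℝ) + 1) / (d : ℝ)) →
      ∀ t s : ℝ, t ∈ Set.Icc 0 q → s ∈ Set.Icc 0 q →
      ‖((((q - t) / q : ℝ) : ℂ) * rsWinding d Λ m x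
            + ((t / q : ℝ) : ℂ) * rsWinding d Λ (m + 1) x
          - ((((q - s) / q : ℝ) : ℂ) * rsWinding d Λ m y
            + ((s / q : ℝ) : ℂ) * rsWinding d Λ (m + 1) y))‖
        + |(q' / q) * t - (q' / q) * s|
      ≤ (d : ℝ) * Λ ^ (-(m : ℝ) * (1 - 1 / (d : ℝ))) * ‖x - y‖
        + (2 * Λ ^ (-(m : ℝ)) / q + q' / q) * |t - s|) ∧
    ∃ K : NNReal, LipschitzOnWith K
      (fun p : ℂ × ℝ =>
        ((((q - p.2) / q : ℝ) : ℂ) * rsWinding d Λ m p.1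
            + ((p.2 / q : ℝ) : ℂ) * rsWinding d Λ (m + 1) p.1,
          (q' / q) * p.2))
      {p : ℂ × ℝ | ‖p.1‖ ≤ Λ ^ (-((m : ℝ) + 1) / (d : ℝ)) ∧ p.2 ∈ Set.Icc 0 q} := by
  have hΛ0 : (0:ℝ) < Λ := lt_trans zero_lt_one hΛ
  have hdR : (1:ℝ) ≤ (d:ℝ) := by exact_mod_cast hd
  have hdpos : (0:ℝ) < (d:ℝ) := lt_of_lt_of_le zero_lt_one hdR
  set A : ℝ := (d : ℝ) * Λ ^ (-(m : ℝ) * (1 - 1 / (d : ℝ))) with hA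
  set B : ℝ := 2 * Λ ^ (-(m : ℝ)) / q + q' / q with hB
  have hApos : 0 < A := by
    rw [hA]; positivity
  have hBpos : 0 < B := by
    rw [hB]; positivity
  have main : ∀ x y : ℂ, ‖x‖ ≤ Λ ^ (-((m : ℝ) + 1) / (d : ℝ)) →
      ‖y‖ ≤ Λ ^ (-((m : ℝ) + 1) / (d : ℝ)) →
      ∀ t s : ℝ, t ∈ Set.Icc 0 q → s ∈ Set.Icc 0 q →
      ‖(((q - t) / q : ℝ) : ℂ) * rsWinding d Λ m x
            + ((t / q : ℝ) : ℂ) * rsWinding d Λ (m + 1) x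
          - ((((q - s) / q : ℝ) : ℂ) * rsWinding d Λ m y
            + ((s / q : ℝ) : ℂ) * rsWinding d Λ (m + 1) y)‖
        + |(q' / q) * t - (q' / q) * s|
      ≤ A * ‖x - y‖ + B * |t - s| := by
    intro x y hx hy t s ht hs
    -- scaled points are in the unit disk
    have hxm : ‖((Λ ^ ((m : ℝ) / (d : ℝ)) : ℝ) : ℂ) * x‖ ≤ 1 := by
      refine scale_le_one Λ hΛ _ _ ?_ x hx
      rw [← add_div]
      apply div_nonpos_of_nonpos_of_nonneg _ hdpos.le
      linarith
    have hym : ‖((Λ ^ ((m : ℝ) / (d : ℝ)) : ℝ) : ℂ) * y‖ ≤ 1 := by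
      refine scale_le_one Λ hΛ _ _ ?_ y hy
      rw [← add_div]
      apply div_nonpos_of_nonpos_of_nonneg _ hdpos.le
      linarith
    have hxm1 : ‖((Λ ^ (((m + 1 : ℕ) : ℝ) / (d : ℝ)) : ℝ) : ℂ) * x‖ ≤ 1 := by
      refine scale_le_one Λ hΛ _ _ ?_ x hx
      rw [← add_div]
      apply div_nonpos_of_nonpos_of_nonneg _ hdpos.le
      push_cast; linarith
    have hym1 : ‖((Λ ^ (((m + 1 : ℕ) : ℝ) / (d : ℝ)) : ℝ) : ℂ) * y‖ ≤ 1 := by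
      refine scale_le_one Λ hΛ _ _ ?_ y hy
      rw [← add_div]
      apply div_nonpos_of_nonpos_of_nonneg _ hdpos.le
      push_cast; linarith
    -- Lipschitz bounds for the two maps
    have L1 : ‖rsWinding d Λ m x - rsWinding d Λ m y‖
        ≤ A * ‖x - y‖ := rs_lip d hd Λ hΛ0 m x y hxm hym
    have L2 : ‖rsWinding d Λ (m + 1) x - rsWinding d Λ (m + 1) y‖
        ≤ A * ‖x - y‖ := by
      refine le_trans (rs_lip d hd Λ hΛ0 (m + 1) x y hxm1 hym1) ?_
      rw [hA]
      have : Λ ^ (-((m + 1 : ℕ) : ℝ) * (1 - 1 / (d : ℝ)))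
          ≤ Λ ^ (-(m : ℝ) * (1 - 1 / (d : ℝ))) := by
        apply Real.rpow_le_rpow_of_exponent_le hΛ.le
        have h1d : 1 / (d:ℝ) ≤ 1 := by
          rw [div_le_one hdpos]; exact hdR
        have : (0:ℝ) ≤ 1 - 1 / (d:ℝ) := by linarith
        push_cast
        nlinarith
      have habs : (0:ℝ) ≤ ‖x - y‖ := norm_nonneg _
      nlinarith [mul_le_mul_of_nonneg_right (mul_le_mul_of_nonneg_left this hdpos.le) habs]
    -- norm bounds
    have M1 : ‖rsWinding d Λ m y‖ ≤ Λ ^ (-(m : ℝ)) :=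
      rs_abs d hd Λ hΛ0 m y hym
    have M2 : ‖rsWinding d Λ (m + 1) y‖ ≤ Λ ^ (-(m : ℝ)) := by
      refine le_trans (rs_abs d hd Λ hΛ0 (m + 1) y hym1) ?_
      apply Real.rpow_le_rpow_of_exponent_le hΛ.le
      push_cast; linarith
    -- algebraic decomposition
    set hX := rsWinding d Λ m x
    set hY := rsWinding d Λ m y
    set hX' := rsWinding d Λ (m + 1) x
    set hY' := rsWinding d Λ (m + 1) y
    have decomp : (((q - t) / q : ℝ) : ℂ) * hX + ((t / q : ℝ) : ℂ) * hX'
        - ((((q - s) / q : ℝ) : ℂ) * hY + ((s / q : ℝ) : ℂ) * hY')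
        = (((q - t) / q : ℝ) : ℂ) * (hX - hY) + ((t / q : ℝ) : ℂ) * (hX' - hY')
          + (((s - t) / q : ℝ) : ℂ) * hY + (((t - s) / q : ℝ) : ℂ) * hY' := by
      have hqC : ((q:ℝ):ℂ) ≠ 0 := by
        simpa using hq.ne'
      push_cast
      field_simp
      ring
    rw [decomp]
    have h1 : (0:ℝ) ≤ (q - t) / q := div_nonneg (by linarith [ht.2]) hq.le
    have h2 : (0:ℝ) ≤ t / q := div_nonneg ht.1 hq.le
    have tri : ‖(((q - t) / q : ℝ) : ℂ) * (hX - hY) + ((t / q : ℝ) : ℂ) * (hX' - hY')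
          + (((s - t) / q : ℝ) : ℂ) * hY + (((t - s) / q : ℝ) : ℂ) * hY'‖
        ≤ ((q - t) / q) * ‖hX - hY‖ + (t / q) * ‖hX' - hY'‖
          + (|s - t| / q) * ‖hY‖ + (|t - s| / q) * ‖hY'‖ := by
      refine le_trans (norm_add_le _ _) ?_
      refine add_le_add (le_trans (norm_add_le _ _) ?_) ?_
      · refine add_le_add (le_trans (norm_add_le _ _) ?_) ?_
        · refine add_le_add ?_ ?_
          · rw [norm_mul, Complex.norm_real, Real.norm_eq_abs, _root_.abs_of_nonneg h1]
          · rw [norm_mul, Complex.norm_real, Real.norm_eq_abs, _root_.abs_of_nonneg h2]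
        · rw [norm_mul, Complex.norm_real, Real.norm_eq_abs, abs_div, _root_.abs_of_nonneg hq.le]
      · rw [norm_mul, Complex.norm_real, Real.norm_eq_abs, abs_div, _root_.abs_of_nonneg hq.le]
    have hts : |s - t| = |t - s| := abs_sub_comm s t
    have h2c : |(q' / q) * t - (q' / q) * s| = (q' / q) * |t - s| := by
      rw [← mul_sub, abs_mul, _root_.abs_of_nonneg (div_nonneg hq'.le hq.le)]
    rw [h2c]
    have hcoef : (q - t) / q + t / q = 1 := by field_simp; ring
    have habsxy : (0:ℝ) ≤ ‖x - y‖ := norm_nonneg _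
    have bY : (|s - t| / q) * ‖hY‖ ≤ (|t - s| / q) * Λ ^ (-(m:ℝ)) := by
      rw [hts]
      exact mul_le_mul_of_nonneg_left M1 (div_nonneg (abs_nonneg _) hq.le)
    have bY' : (|t - s| / q) * ‖hY'‖ ≤ (|t - s| / q) * Λ ^ (-(m:ℝ)) :=
      mul_le_mul_of_nonneg_left M2 (div_nonneg (abs_nonneg _) hq.le)
    have b1 : ((q - t) / q) * ‖hX - hY‖ ≤ ((q - t) / q) * (A * ‖x - y‖) :=
      mul_le_mul_of_nonneg_left L1 h1
    have b2 : (t / q) * ‖hX' - hY'‖ ≤ (t / q) * (A * ‖x - y‖) :=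
      mul_le_mul_of_nonneg_left L2 h2
    have final : ((q - t) / q) * (A * ‖x - y‖) + (t / q) * (A * ‖x - y‖)
          + (|t - s| / q) * Λ ^ (-(m:ℝ)) + (|t - s| / q) * Λ ^ (-(m:ℝ)) + (q' / q) * |t - s|
        = A * ‖x - y‖ + B * |t - s| := by
      rw [hB]
      field_simp
      ring
    linarith [tri, b1, b2, bY, bY']
  refine ⟨main, ⟨(A + B).toNNReal, ?_⟩⟩
  apply LipschitzOnWith.of_dist_le_mul
  rintro ⟨x, t⟩ ⟨hx, ht⟩ ⟨y, s⟩ ⟨hy, hs⟩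
  have key := main x y hx hy t s ht hs
  have hK : ((A + B).toNNReal : ℝ) = A + B := Real.coe_toNNReal _ (by positivity)
  rw [hK, Prod.dist_eq, Prod.dist_eq]
  simp only [Complex.dist_eq, Real.dist_eq]
  have hd1 : ‖x - y‖ ≤ max (‖x - y‖) |t - s| := le_max_left _ _
  have hd2 : |t - s| ≤ max (‖x - y‖) |t - s| := le_max_right _ _
  have hmax : max
      (‖(((q - t) / q : ℝ) : ℂ) * rsWinding d Λ m x
            + ((t / q : ℝ) : ℂ) * rsWinding d Λ (m + 1) x
          - ((((q - s) / q : ℝ) : ℂ) * rsWinding d Λ m y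
            + ((s / q : ℝ) : ℂ) * rsWinding d Λ (m + 1) y)‖)
      |(q' / q) * t - (q' / q) * s|
      ≤ A * ‖x - y‖ + B * |t - s| := by
    apply max_le
    · have := abs_nonneg ((q' / q) * t - (q' / q) * s)
      linarith
    · have := norm_nonneg
        ((((q - t) / q : ℝ) : ℂ) * rsWinding d Λ m x
            + ((t / q : ℝ) : ℂ) * rsWinding d Λ (m + 1) x
          - ((((q - s) / q : ℝ) : ℂ) * rsWinding d Λ m y
            + ((s / q : ℝ) : ℂ) * rsWinding d Λ (m + 1) y))
      linarith
  refine le_trans hmax ?_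
  have e1 : A * ‖x - y‖ ≤ A * max (‖x - y‖) |t - s| :=
    mul_le_mul_of_nonneg_left hd1 hApos.le
  have e2 : B * |t - s| ≤ B * max (‖x - y‖) |t - s| :=
    mul_le_mul_of_nonneg_left hd2 hBpos.le
  calc A * ‖x - y‖ + B * |t - s|
      ≤ (A + B) * max (‖x - y‖) |t - s| := by linarith
    _ = (A + B) * max (‖x - y‖) |t - s| := rfl
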